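/- Let Ω ⊆ ℝ^n be open, m a positive integer, and let u, φ be C² on Ω with φ > 0. Define p_j = 2^j and σ_m = (1/4) Σ_{j=1}^{m−1} 4^{p_j}. Then pointwise on Ω: |∇u|^{p_m} + (Δφ/φ + σ_m) u^{p_m} = Σ_{j=1}^{m−1} ( |∇(u^{p_{m−j−1}})|^{p_j} − 2^{p_j − 1} u^{p_{m−1}} )² + |∇(u^{p_{m−1}}) − (∇φ/φ) u^{p_{m−1}}|² + div((∇φ/φ) u^{p_m}). -/

import Mathlib

open MeasureTheory Finset
open scoped RealInnerProductSpace

noncomputable def grad {n : ℕ} (f : EuclideanSpace ℝ (Fin n) → ℝ) :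
    EuclideanSpace ℝ (Fin n) → EuclideanSpace ℝ (Fin n) :=
  fun x => gradient f x

noncomputable def dvg {n : ℕ} (V : EuclideanSpace ℝ (Fin n) → EuclideanSpace ℝ (Fin n)) :
    EuclideanSpace ℝ (Fin n) → ℝ :=
  fun x => ∑ i, fderiv ℝ V x (EuclideanSpace.single i 1) i

noncomputable def lap {n : ℕ} (f : EuclideanSpace ℝ (Fin n) → ℝ) :
    EuclideanSpace ℝ (Fin n) → ℝ :=
  dvg (grad f)

variable {n : ℕ}

lemma inner_grad (f : EuclideanSpace ℝ (Fin n) → ℝ) (x v : EuclideanSpace ℝ (Fin n)) :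
    ⟪grad f x, v⟫ = fderiv ℝ f x v := by
  simp [grad, gradient, InnerProductSpace.toDual_symm_apply]

lemma eucl_decomp (w : EuclideanSpace ℝ (Fin n)) :
    ∑ i, w i • EuclideanSpace.single i (1:ℝ) = w := by
  ext j
  rw [WithLp.ofLp_sum, Finset.sum_apply]
  simp [EuclideanSpace.single_apply]

lemma dvg_smul {f : EuclideanSpace ℝ (Fin n) → ℝ}
    {V : EuclideanSpace ℝ (Fin n) → EuclideanSpace ℝ (Fin n)}
    {x : EuclideanSpace ℝ (Fin n)}
    (hf : DifferentiableAt ℝ f x) (hV : DifferentiableAt ℝ V x) :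
    dvg (fun y => f y • V y) x = fderiv ℝ f x (V x) + f x * dvg V x := by
  simp only [dvg]
  rw [fderiv_fun_smul hf hV]
  have : ∀ i : Fin n, ((f x • fderiv ℝ V x + (fderiv ℝ f x).smulRight (V x))
      (EuclideanSpace.single i 1)) i
      = f x * (fderiv ℝ V x (EuclideanSpace.single i 1)) i
        + fderiv ℝ f x (EuclideanSpace.single i 1) * V x i := by
    intro i
    simp [ContinuousLinearMap.smulRight_apply, mul_comm]
  rw [Finset.sum_congr rfl fun i _ => this i, Finset.sum_add_distrib, ← Finset.mul_sum]
  have h2 : ∑ i, fderiv ℝ f x (EuclideanSpace.single i 1) * V x i = fderiv ℝ f x (V x) := by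
    conv_rhs => rw [← eucl_decomp (V x)]
    rw [map_sum]
    exact Finset.sum_congr rfl fun i _ => by rw [(fderiv ℝ f x).map_smul]; simp [mul_comm]
  rw [h2]; ring

lemma grad_sq {u : EuclideanSpace ℝ (Fin n) → ℝ} {x : EuclideanSpace ℝ (Fin n)}
    (hu : DifferentiableAt ℝ u x) :
    grad (fun y => u y ^ 2) x = (2 * u x) • grad u x := by
  have h : (fun y => u y ^ 2) = fun y => u y * u y := by
    funext y; ring
  simp only [grad, gradient, h]
  rw [fderiv_fun_mul hu hu]
  rw [show u x • fderiv ℝ u x + u x • fderiv ℝ u x = (2 * u x) • fderiv ℝ u x by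
    rw [two_mul, add_smul]]
  exact map_smul _ _ _

lemma grad_diff {φ : EuclideanSpace ℝ (Fin n) → ℝ} {Ω : Set (EuclideanSpace ℝ (Fin n))}
    (hΩ : IsOpen Ω) (hφ : ContDiffOn ℝ 2 φ Ω) {x : EuclideanSpace ℝ (Fin n)} (hx : x ∈ Ω) :
    DifferentiableAt ℝ (grad φ) x := by
  have h1 : ContDiffAt ℝ 2 φ x := hφ.contDiffAt (hΩ.mem_nhds hx)
  have h2 : ContDiffAt ℝ 1 (fderiv ℝ φ) x := h1.fderiv_right (by norm_num)
  have h3 : DifferentiableAt ℝ (fderiv ℝ φ) x := h2.differentiableAt (by norm_num)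
  have : grad φ = fun y =>
      (InnerProductSpace.toDual ℝ (EuclideanSpace ℝ (Fin n))).symm (fderiv ℝ φ y) := rfl
  rw [this]
  exact ((InnerProductSpace.toDual ℝ
    (EuclideanSpace ℝ (Fin n))).symm.toContinuousLinearEquiv.differentiableAt).comp x h3

lemma L1 {u φ : EuclideanSpace ℝ (Fin n) → ℝ} {x : EuclideanSpace ℝ (Fin n)}
    (hu : DifferentiableAt ℝ u x) (hφd : DifferentiableAt ℝ φ x)
    (hφ' : DifferentiableAt ℝ (grad φ) x) (hx0 : φ x ≠ 0) :
    ‖grad u x‖ ^ 2 + (lap φ x / φ x) * (u x) ^ 2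
      = ‖grad u x - (u x / φ x) • grad φ x‖ ^ 2
        + dvg (fun y => ((u y) ^ 2 / φ y) • grad φ y) x := by
  set Du := fderiv ℝ u x with hDu
  set Dφ := fderiv ℝ φ x with hDφ
  have hu2 : HasFDerivAt (fun y => u y ^ 2) ((2 * u x) • Du) x := by
    have h := hu.hasFDerivAt.fun_mul hu.hasFDerivAt
    have e1 : (fun y => u y ^ 2) = fun y => u y * u y := by funext y; ring
    rw [e1]
    exact h.congr_fderiv (by rw [two_mul, add_smul])
  have hinv : HasFDerivAt (fun y => (φ y)⁻¹) ((-(φ x ^ 2)⁻¹) • Dφ) x :=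
    (hasDerivAt_inv hx0).comp_hasFDerivAt x hφd.hasFDerivAt
  have hq : HasFDerivAt (fun y => u y ^ 2 / φ y)
      ((u x ^ 2) • ((-(φ x ^ 2)⁻¹) • Dφ) + (φ x)⁻¹ • ((2 * u x) • Du)) x := by
    have e : (fun y => u y ^ 2 / φ y) = fun y => (u y ^ 2) * (φ y)⁻¹ := by
      funext y; rw [div_eq_mul_inv]
    rw [e]
    exact hu2.mul hinv
  rw [dvg_smul hq.differentiableAt hφ', hq.fderiv]
  have e1 : Du (grad φ x) = ⟪grad u x, grad φ x⟫ := (inner_grad u x _).symm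
  have e2 : Dφ (grad φ x) = ‖grad φ x‖ ^ 2 := by
    rw [← inner_grad, real_inner_self_eq_norm_sq]
  have e3 : lap φ x = dvg (grad φ) x := rfl
  rw [norm_sub_sq_real]
  simp only [ContinuousLinearMap.add_apply, ContinuousLinearMap.smul_apply, e1, e2, e3,
    real_inner_smul_right, norm_smul, Real.norm_eq_abs, mul_pow, sq_abs,
    real_inner_self_eq_norm_sq, smul_eq_mul]
  field_simp
  ring

lemma aux {Ω : Set (EuclideanSpace ℝ (Fin n))} (hΩ : IsOpen Ω)
    (φ : EuclideanSpace ℝ (Fin n) → ℝ) (hφ : ContDiffOn ℝ 2 φ Ω)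
    (hφpos : ∀ x ∈ Ω, 0 < φ x) :
    ∀ m, 1 ≤ m → ∀ u : EuclideanSpace ℝ (Fin n) → ℝ, ContDiffOn ℝ 2 u Ω → ∀ x ∈ Ω,
      ‖grad u x‖ ^ (2 ^ m) +
        (lap φ x / φ x + (1 / 4) * ∑ j ∈ Finset.Icc 1 (m - 1), (4 : ℝ) ^ (2 ^ j)) *
          (u x) ^ (2 ^ m) =
      (∑ j ∈ Finset.Icc 1 (m - 1),
        (‖grad (fun y => (u y) ^ (2 ^ (m - j - 1))) x‖ ^ (2 ^ j) -
          2 ^ (2 ^ j - 1) * (u x) ^ (2 ^ (m - 1))) ^ 2) +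
      ‖grad (fun y => (u y) ^ (2 ^ (m - 1))) x -
        ((u x) ^ (2 ^ (m - 1)) / φ x) • grad φ x‖ ^ 2 +
      dvg (fun y => ((u y) ^ (2 ^ m) / φ y) • grad φ y) x := by
  intro m hm
  induction m, hm using Nat.le_induction with
  | base =>
    intro u hu x hx
    have hux : DifferentiableAt ℝ u x :=
      (hu.contDiffAt (hΩ.mem_nhds hx)).differentiableAt (by norm_num)
    have hφx : DifferentiableAt ℝ φ x :=
      (hφ.contDiffAt (hΩ.mem_nhds hx)).differentiableAt (by norm_num)
    have hgφ : DifferentiableAt ℝ (grad φ) x := grad_diff hΩ hφ hx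
    have h0 : Finset.Icc 1 0 = (∅ : Finset ℕ) := by decide
    simp only [h0, Finset.sum_empty, mul_zero, add_zero, pow_one, pow_zero, Nat.sub_self]
    have := L1 hux hφx hgφ (ne_of_gt (hφpos x hx))
    simpa using this
  | succ k hk ih =>
    intro u hu x hx
    obtain ⟨l, rfl⟩ : ∃ l, k = l + 1 := ⟨k - 1, by omega⟩
    have hux : DifferentiableAt ℝ u x :=
      (hu.contDiffAt (hΩ.mem_nhds hx)).differentiableAt (by norm_num)
    have hv : ContDiffOn ℝ 2 (fun y => u y ^ 2) Ω := hu.pow 2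
    have H := ih (fun y => u y ^ 2) hv x hx
    simp only [Nat.add_sub_cancel] at H
    rw [grad_sq hux] at H
    have epow : ∀ (c : ℕ) (y : EuclideanSpace ℝ (Fin n)),
        (u y ^ 2) ^ 2 ^ c = u y ^ 2 ^ (c + 1) := by
      intro c y; rw [← pow_mul]; congr 1; ring
    simp only [epow] at H
    have heven : Even (2 ^ (l + 1)) := ⟨2 ^ l, by ring⟩
    have hA : ‖(2 * u x) • grad u x‖ ^ 2 ^ (l + 1)
        = 2 ^ 2 ^ (l + 1) * (u x) ^ 2 ^ (l + 1) * ‖grad u x‖ ^ 2 ^ (l + 1) := by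
      rw [norm_smul, Real.norm_eq_abs, mul_pow, heven.pow_abs, mul_pow]
    rw [hA] at H
    have Hsum : ∑ j ∈ Finset.Icc 1 l,
          (‖grad (fun y => u y ^ 2 ^ (l + 1 - j - 1 + 1)) x‖ ^ 2 ^ j -
            2 ^ (2 ^ j - 1) * (u x) ^ 2 ^ (l + 1)) ^ 2
        = ∑ j ∈ Finset.Icc 1 l,
          (‖grad (fun y => u y ^ 2 ^ (l + 1 + 1 - j - 1)) x‖ ^ 2 ^ j -
            2 ^ (2 ^ j - 1) * (u x) ^ 2 ^ (l + 1)) ^ 2 := by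
      refine Finset.sum_congr rfl fun j hj => ?_
      simp only [Finset.mem_Icc] at hj
      rw [show l + 1 - j - 1 + 1 = l + 1 + 1 - j - 1 by omega]
    rw [Hsum] at H
    have e1 : ‖grad u x‖ ^ 2 ^ (l + 1 + 1) = (‖grad u x‖ ^ 2 ^ (l + 1)) ^ 2 := by
      rw [← pow_mul, pow_succ]
    have e2 : (u x) ^ 2 ^ (l + 1 + 1) = ((u x) ^ 2 ^ (l + 1)) ^ 2 := by
      rw [← pow_mul, pow_succ]
    rw [e2] at H
    simp only [Nat.add_sub_cancel]
    rw [Finset.sum_Icc_succ_top (show 1 ≤ l + 1 by omega),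
      Finset.sum_Icc_succ_top (show 1 ≤ l + 1 by omega),
      show l + 1 + 1 - (l + 1) - 1 = 0 by omega]
    simp only [pow_zero, pow_one]
    rw [e1, e2]
    obtain ⟨b, hb⟩ : ∃ b, 2 ^ (l + 1) = b + 1 :=
      ⟨2 ^ (l + 1) - 1, (Nat.sub_add_cancel Nat.one_le_two_pow).symm⟩
    have c1 : (2 : ℝ) ^ 2 ^ (l + 1) = 2 * 2 ^ (2 ^ (l + 1) - 1) := by
      rw [hb, Nat.add_sub_cancel, pow_succ]; ring
    have c2 : (4 : ℝ) ^ 2 ^ (l + 1) = 4 * (2 ^ (2 ^ (l + 1) - 1)) ^ 2 := by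
      rw [hb, Nat.add_sub_cancel, pow_succ, show (4 : ℝ) = 2 ^ 2 by norm_num,
        ← pow_mul, mul_comm 2 b, pow_mul]
      ring
    linear_combination H + ((u x) ^ 2 ^ (l + 1)) ^ 2 / 4 * c2
      - ((u x) ^ 2 ^ (l + 1) * ‖grad u x‖ ^ 2 ^ (l + 1)) * c1

theorem stmt10 {n : ℕ} (Ω : Set (EuclideanSpace ℝ (Fin n))) (hΩ : IsOpen Ω)
    (m : ℕ) (hm : 1 ≤ m)
    (u φ : EuclideanSpace ℝ (Fin n) → ℝ)
    (hu : ContDiffOn ℝ 2 u Ω) (hφ : ContDiffOn ℝ 2 φ Ω)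
    (hφpos : ∀ x ∈ Ω, 0 < φ x) :
    ∀ x ∈ Ω,
      ‖grad u x‖ ^ (2 ^ m) +
        (lap φ x / φ x + (1 / 4) * ∑ j ∈ Finset.Icc 1 (m - 1), (4 : ℝ) ^ (2 ^ j)) *
          (u x) ^ (2 ^ m) =
      (∑ j ∈ Finset.Icc 1 (m - 1),
        (‖grad (fun y => (u y) ^ (2 ^ (m - j - 1))) x‖ ^ (2 ^ j) -
          2 ^ (2 ^ j - 1) * (u x) ^ (2 ^ (m - 1))) ^ 2) +
      ‖grad (fun y => (u y) ^ (2 ^ (m - 1))) x -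
        ((u x) ^ (2 ^ (m - 1)) / φ x) • grad φ x‖ ^ 2 +
      dvg (fun y => ((u y) ^ (2 ^ m) / φ y) • grad φ y) x := by
  exact fun x hx => aux hΩ φ hφ hφpos m hm u hu x hx
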